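/- Let p be an odd prime and let H be a group with an infinite cyclic normal subgroup A such that H/A is a finite p-group. Then A is central in H, the commutator subgroup of H is finite, and H is isomorphic to a semidirect product F ⋊ ℤ, where F is a finite normal p-subgroup of H. -/

import Mathlib

open scoped commutatorElement

private lemma stmt14_comm_left {G : Type*} [Group G] {c : G}
    (hc : c ∈ Subgroup.center G) (u v : G) : ⁅u * c, v⁆ = ⁅u, v⁆ := by
  have hc' := Subgroup.mem_center_iff.mp hc
  calc ⁅u * c, v⁆ = u * (c * v * c⁻¹) * u⁻¹ * v⁻¹ := by
        rw [commutatorElement_def]; group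
    _ = u * v * u⁻¹ * v⁻¹ := by rw [← hc' v, mul_inv_cancel_right]
    _ = ⁅u, v⁆ := (commutatorElement_def u v).symm

private lemma stmt14_comm_right {G : Type*} [Group G] {c : G}
    (hc : c ∈ Subgroup.center G) (u v : G) : ⁅u, v * c⁆ = ⁅u, v⁆ := by
  have hc' := Subgroup.mem_center_iff.mp hc
  calc ⁅u, v * c⁆ = u * v * (c * u⁻¹ * c⁻¹) * v⁻¹ := by
        rw [commutatorElement_def]; group
    _ = u * v * u⁻¹ * v⁻¹ := by rw [← hc' u⁻¹, mul_inv_cancel_right]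
    _ = ⁅u, v⁆ := (commutatorElement_def u v).symm

private lemma stmt14_commutatorSet_finite {G : Type*} [Group G]
    (h : Finite (G ⧸ Subgroup.center G)) : (commutatorSet G).Finite := by
  haveI := h
  apply Set.Finite.subset (Set.finite_range
    (fun x : (G ⧸ Subgroup.center G) × (G ⧸ Subgroup.center G) => ⁅x.1.out, x.2.out⁆))
  rintro - ⟨g₁, g₂, rfl⟩
  obtain ⟨c, hc⟩ := QuotientGroup.mk_out_eq_mul (Subgroup.center G) g₁
  obtain ⟨d, hd⟩ := QuotientGroup.mk_out_eq_mul (Subgroup.center G) g₂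
  refine ⟨(QuotientGroup.mk g₁, QuotientGroup.mk g₂), ?_⟩
  simp only [hc, hd]
  rw [stmt14_comm_left c.2, stmt14_comm_right d.2]

theorem stmt_14 (p : ℕ) (hp : p.Prime) (hodd : p ≠ 2) (H : Type*) [Group H]
    (A : Subgroup H) (hA : A.Normal) (eA : A ≃* Multiplicative ℤ)
    (hfin : Finite (H ⧸ A)) (hq : IsPGroup p (H ⧸ A)) :
    A ≤ Subgroup.center H ∧ Finite (commutator H) ∧
      ∃ F : Subgroup H, F.Normal ∧ Finite F ∧ IsPGroup p F ∧
        ∃ φ : Multiplicative ℤ →* MulAut F,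
          Nonempty (H ≃* F ⋊[φ] Multiplicative ℤ) := by
  classical
  haveI := Fact.mk hp
  set zA : A := eA.symm (Multiplicative.ofAdd 1) with hzA_def
  set z : H := (zA : H) with hz_def
  -- every element of A is a power of z
  have hAz : ∀ a : H, a ∈ A → ∃ k : ℤ, a = z ^ k := by
    intro a ha
    refine ⟨Multiplicative.toAdd (eA ⟨a, ha⟩), ?_⟩
    have h2 : (⟨a, ha⟩ : A) = zA ^ Multiplicative.toAdd (eA ⟨a, ha⟩) := by
      apply eA.injective
      rw [map_zpow, hzA_def, eA.apply_symm_apply, ← ofAdd_zsmul, smul_eq_mul, mul_one,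
        ofAdd_toAdd]
    have := congrArg (Subtype.val) h2
    simpa using this
  have hz1 : ∀ k : ℤ, z ^ k = 1 → k = 0 := by
    intro k hk
    have h1 : zA ^ k = 1 := by
      apply Subtype.coe_injective
      simpa using hk
    have h2 := congrArg eA h1
    rw [map_zpow, map_one, hzA_def, eA.apply_symm_apply, ← ofAdd_zsmul, smul_eq_mul,
      mul_one] at h2
    simpa using congrArg Multiplicative.toAdd h2
  have hzinj : ∀ k l : ℤ, z ^ k = z ^ l → k = l := by
    intro k l hkl
    have h0 : z ^ (k - l) = 1 := by
      rw [zpow_sub, hkl, mul_inv_cancel]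
    have := hz1 _ h0
    omega
  have hzA_mem : z ∈ A := zA.2
  -- conjugation fixes z
  have hcomm : ∀ h : H, h * z * h⁻¹ = z := by
    intro h
    obtain ⟨n, hn⟩ := hAz _ (hA.conj_mem z hzA_mem h)
    obtain ⟨mm, hm⟩ := hAz _ (hA.conj_mem z hzA_mem h⁻¹)
    rw [inv_inv] at hm
    have hmn : mm * n = 1 := by
      have h1 : z = h⁻¹ * (h * z * h⁻¹) * h := by group
      rw [hn] at h1
      have h2 : h⁻¹ * z ^ n * h = (h⁻¹ * z * h) ^ n := by
        have h3 := conj_zpow (i := n) (a := h⁻¹) (b := z)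
        rw [inv_inv] at h3
        rw [h3]
      rw [h2, hm, ← zpow_mul] at h1
      have := hzinj 1 (mm * n) (by simpa using h1)
      omega
    have hn1 : n = 1 ∨ n = -1 :=
      Int.isUnit_iff.mp (IsUnit.of_mul_eq_one (a := n) mm (by rw [mul_comm] at hmn; exact hmn))
    rcases hn1 with hcase | hcase
    · rw [hn, hcase, zpow_one]
    · exfalso
      obtain ⟨k, hk⟩ := IsPGroup.iff_card.mp hq
      set N := Nat.card (H ⧸ A) with hN_def
      have hNodd : Odd N := by rw [hk]; exact (hp.odd_of_ne_two hodd).pow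
      have hNA : h ^ N ∈ A := by
        have h1 : ((QuotientGroup.mk h : H ⧸ A)) ^ N = 1 := pow_card_eq_one'
        rwa [← QuotientGroup.mk_pow, QuotientGroup.eq_one_iff] at h1
      obtain ⟨t, ht⟩ := hAz _ hNA
      have hconj' : ∀ j : ℕ, h ^ j * z * (h ^ j)⁻¹ = z ^ ((n : ℤ) ^ j) := by
        intro j
        induction j with
        | zero => simp
        | succ j ih =>
          have e0 : h ^ (j + 1) = h * h ^ j := by rw [pow_succ']
          rw [e0, mul_inv_rev]
          have e1 : h * h ^ j * z * ((h ^ j)⁻¹ * h⁻¹) = h * (h ^ j * z * (h ^ j)⁻¹) * h⁻¹ := by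
            group
          rw [e1, ih, ← conj_zpow, hn, ← zpow_mul]
          congr 1
          rw [pow_succ]
          ring
      have hzN : h ^ N * z * (h ^ N)⁻¹ = z := by
        rw [ht]
        group
      have hC := hconj' N
      rw [hzN, hcase, hNodd.neg_one_pow] at hC
      have := hzinj 1 (-1) (by rw [zpow_one]; exact hC)
      omega
  have hz_center : z ∈ Subgroup.center H := by
    rw [Subgroup.mem_center_iff]
    intro g
    have h1 := hcomm g
    calc g * z = g * z * g⁻¹ * g := by group
      _ = z * g := by rw [h1]
  have hcentral : A ≤ Subgroup.center H := by
    intro a ha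
    obtain ⟨k, rfl⟩ := hAz a ha
    exact Subgroup.zpow_mem _ hz_center k
  -- finite quotient by center
  haveI hQfin : Finite (H ⧸ Subgroup.center H) := by
    have hsurj : Function.Surjective
        (QuotientGroup.map A (Subgroup.center H) (MonoidHom.id H) (by simpa using hcentral)) := by
      intro y
      obtain ⟨g, rfl⟩ := QuotientGroup.mk_surjective y
      exact ⟨QuotientGroup.mk g, rfl⟩
    exact Finite.of_surjective _ hsurj
  haveI hCSfin : Finite (commutatorSet H) := (stmt14_commutatorSet_finite hQfin).to_subtype
  refine ⟨hcentral, inferInstance, ?_⟩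
  -- indices
  haveI hAFI : A.FiniteIndex := Subgroup.finiteIndex_of_finite_quotient (H := A)
  haveI hCFI : (Subgroup.center H).FiniteIndex := Subgroup.finiteIndex_of_le hcentral
  set n := (Subgroup.center H).index with hn_def
  set B := A.subgroupOf (Subgroup.center H) with hB_def
  haveI hBFI : B.FiniteIndex := by
    refine ⟨fun h0 => ?_⟩
    have h1 := Subgroup.relIndex_mul_index hcentral
    rw [show A.relIndex (Subgroup.center H) = B.index from rfl, h0, zero_mul] at h1
    exact hAFI.index_ne_zero h1.symm
  set m := B.index with hm_def
  -- the homomorphism H →* A,  g ↦ g ^ (n * m)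
  set χ2 : Subgroup.center H →* A :=
    { toFun := fun x => ⟨((x ^ m : Subgroup.center H) : H),
        Subgroup.mem_subgroupOf.mp (B.pow_index_mem x)⟩
      map_one' := by ext; simp
      map_mul' := fun x y => by ext; simp [(show Commute (x : H) y from Subgroup.mem_center_iff.mp y.2 x).mul_pow] } with hχ2_def
  set χ : H →* A := χ2.comp (MonoidHom.transferCenterPow H) with hχ_def
  set ψ : H →* Multiplicative ℤ := eA.toMonoidHom.comp χ with hψ_def
  have hχ : ∀ g : H, ((χ g : A) : H) = g ^ (n * m) := by
    intro g
    show ((MonoidHom.transferCenterPow H g ^ m : Subgroup.center H) : H) = g ^ (n * m)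
    rw [SubmonoidClass.coe_pow, MonoidHom.transferCenterPow_apply, ← pow_mul]
  have hnm0 : n * m ≠ 0 := Nat.mul_ne_zero hCFI.index_ne_zero hBFI.index_ne_zero
  have hψeq : ∀ g : H, ψ g = eA (χ g) := fun g => rfl
  have hkerψ : ∀ g : H, ψ g = 1 ↔ g ^ (n * m) = 1 := by
    intro g
    rw [hψeq]
    constructor
    · intro hg
      have h1 : χ g = 1 := eA.injective (by rw [hg, map_one])
      calc g ^ (n * m) = ((χ g : A) : H) := (hχ g).symm
        _ = 1 := by rw [h1]; rfl
    · intro hg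
      have h1 : χ g = 1 := by
        apply Subtype.coe_injective
        show ((χ g : A) : H) = ((1 : A) : H)
        rw [hχ g, hg]
        rfl
      rw [h1, map_one]
  set F := ψ.ker with hF_def
  set ρ : F →* H ⧸ A := (QuotientGroup.mk' A).comp F.subtype with hρ_def
  have hρinj : Function.Injective ρ := by
    rw [injective_iff_map_eq_one]
    rintro ⟨f, hf⟩ h1
    have hfA : f ∈ A := by
      have h2 : (QuotientGroup.mk f : H ⧸ A) = 1 := h1
      rwa [QuotientGroup.eq_one_iff] at h2
    obtain ⟨k, hk⟩ := hAz f hfA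
    have hf' : f ^ (n * m) = 1 := (hkerψ f).mp hf
    rw [hk, ← zpow_natCast (z ^ k) (n * m), ← zpow_mul] at hf'
    have hk0 : k * ((n * m : ℕ) : ℤ) = 0 := hz1 _ hf'
    have hk1 : k = 0 := by
      rcases mul_eq_zero.mp hk0 with h | h
      · exact h
      · exact absurd (Int.natCast_eq_zero.mp h) hnm0
    have hfone : f = 1 := by rw [hk, hk1, zpow_zero]
    exact Subtype.ext hfone
  haveI hFfin : Finite F := Finite.of_injective ρ hρinj
  have hFp : IsPGroup p F := hq.of_injective ρ hρinj
  -- the range of ψ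
  set S : AddSubgroup ℤ := Subgroup.toAddSubgroup' ψ.range with hS_def
  have hS : ∀ x : ℤ, x ∈ S ↔ Multiplicative.ofAdd x ∈ ψ.range := fun x => Iff.rfl
  obtain ⟨a, ha⟩ := Int.subgroup_cyclic S
  have hψz : ψ z = Multiplicative.ofAdd ((n * m : ℕ) : ℤ) := by
    have hcoe : ((zA ^ (n * m) : A) : H) = z ^ (n * m) := by
      rw [SubmonoidClass.coe_pow]
    have h1 : χ z = zA ^ (n * m) := Subtype.coe_injective (by
      show ((χ z : A) : H) = ((zA ^ (n * m) : A) : H)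
      rw [hχ z, hcoe])
    rw [hψeq, h1, map_pow, hzA_def, eA.apply_symm_apply, ← ofAdd_nsmul]
    congr 1
    simp
  have ha0 : a ≠ 0 := by
    intro h0
    have hmem : Multiplicative.toAdd (ψ z) ∈ S := by
      rw [hS, ofAdd_toAdd]
      exact ⟨z, rfl⟩
    rw [ha, h0] at hmem
    simp only [AddSubgroup.closure_singleton_zero, AddSubgroup.mem_bot] at hmem
    rw [hψz, toAdd_ofAdd] at hmem
    exact hnm0 (Int.natCast_eq_zero.mp hmem)
  have hamem : Multiplicative.ofAdd a ∈ ψ.range := by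
    rw [← hS, ha]
    exact AddSubgroup.mem_closure_singleton.mpr ⟨1, one_smul _ _⟩
  obtain ⟨h₀, hh₀⟩ := hamem
  -- the semidirect product
  set φF : Multiplicative ℤ →* MulAut F := MulAut.conjNormal.comp (zpowersHom H h₀) with hφF_def
  have compat : ∀ g : Multiplicative ℤ,
      F.subtype.comp (φF g).toMonoidHom
        = (MulAut.conj ((zpowersHom H h₀) g)).toMonoidHom.comp F.subtype := by
    intro g
    ext f
    rfl
  set Φ : F ⋊[φF] Multiplicative ℤ →* H :=
    SemidirectProduct.lift F.subtype (zpowersHom H h₀) compat with hΦ_def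
  have hΦ : ∀ x : F ⋊[φF] Multiplicative ℤ,
      Φ x = (x.left : H) * h₀ ^ (Multiplicative.toAdd x.right) := fun x => rfl
  have hψh₀ : ∀ k : ℤ, ψ (h₀ ^ k) = Multiplicative.ofAdd (k * a) := by
    intro k
    rw [map_zpow, hh₀, ← ofAdd_zsmul, smul_eq_mul]
  have hinj : Function.Injective Φ := by
    rw [injective_iff_map_eq_one]
    intro x hx
    have hx' : (x.left : H) * h₀ ^ (Multiplicative.toAdd x.right) = 1 := by
      rw [← hΦ x]; exact hx
    have h2 : ψ ((x.left : H) * h₀ ^ (Multiplicative.toAdd x.right)) = 1 := by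
      rw [hx', map_one]
    have h3 : ψ (x.left : H) = 1 := x.left.2
    rw [map_mul, h3, one_mul, hψh₀] at h2
    have h4 : Multiplicative.toAdd x.right * a = 0 := by
      have h5 := congrArg Multiplicative.toAdd h2
      rwa [toAdd_ofAdd, toAdd_one] at h5
    have h5 : Multiplicative.toAdd x.right = 0 := by
      rcases mul_eq_zero.mp h4 with h | h
      · exact h
      · exact absurd h ha0
    have h6 : x.right = 1 := by
      have h7 : x.right = Multiplicative.ofAdd 0 := by rw [← h5, ofAdd_toAdd]
      simpa using h7
    have h7 : (x.left : H) = 1 := by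
      rw [h6] at hx'
      simpa using hx'
    apply SemidirectProduct.ext
    · exact Subtype.ext (by simpa using h7)
    · simpa using h6
  have hsurj : Function.Surjective Φ := by
    intro g
    have hg : Multiplicative.toAdd (ψ g) ∈ S := by
      rw [hS, ofAdd_toAdd]
      exact ⟨g, rfl⟩
    rw [ha] at hg
    obtain ⟨k, hk⟩ := AddSubgroup.mem_closure_singleton.mp hg
    have hmem : g * (h₀ ^ k)⁻¹ ∈ F := by
      show ψ (g * (h₀ ^ k)⁻¹) = 1
      rw [map_mul, map_inv, hψh₀]
      have hg' : ψ g = Multiplicative.ofAdd (k * a) := by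
        rw [← ofAdd_toAdd (ψ g), ← hk, smul_eq_mul]
      rw [hg']
      simp
    refine ⟨⟨⟨g * (h₀ ^ k)⁻¹, hmem⟩, Multiplicative.ofAdd k⟩, ?_⟩
    rw [hΦ]
    simp
  exact ⟨F, inferInstance, hFfin, hFp, φF,
    ⟨(MulEquiv.ofBijective Φ ⟨hinj, hsurj⟩).symm⟩⟩
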